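/- For 0 < s < 1, the s-energy of the uniform measure on the unit circle, I_s := (1/2π)∫_0^{2π}(2 - 2cos φ)^{-s/2} dφ = (1/2π)∫_0^{2π}(2 sin(φ/2))^{-s} dφ, equals Γ(1-s)/Γ(1-s/2)², and also equals 2^{-s}Γ((1-s)/2)/(√π Γ(1-s/2)). -/

import Mathlib

open Real MeasureTheory intervalIntegral

lemma real_beta {p q : ℝ} (hp : 0 < p) (hq : 0 < q) :
    ∫ x in (0:ℝ)..1, x ^ (p - 1) * (1 - x) ^ (q - 1)
      = Real.Gamma p * Real.Gamma q / Real.Gamma (p + q) := by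
  have hpq : (0:ℝ) < p + q := by linarith
  have hG : Real.Gamma (p + q) ≠ 0 := (Real.Gamma_pos_of_pos hpq).ne'
  have key := Complex.Gamma_mul_Gamma_eq_betaIntegral (s := (p:ℂ)) (t := (q:ℂ))
    (by simpa using hp) (by simpa using hq)
  have hco : Complex.betaIntegral p q
      = ((∫ x in (0:ℝ)..1, x ^ (p - 1) * (1 - x) ^ (q - 1) : ℝ) : ℂ) := by
    rw [Complex.betaIntegral, ← intervalIntegral.integral_ofReal]
    apply intervalIntegral.integral_congr
    intro x hx
    rw [Set.uIcc_of_le (by norm_num : (0:ℝ) ≤ 1)] at hx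
    push_cast
    rw [show (p:ℂ) - 1 = ((p - 1 : ℝ) : ℂ) by push_cast; ring,
        show (q:ℂ) - 1 = ((q - 1 : ℝ) : ℂ) by push_cast; ring,
        ← Complex.ofReal_cpow hx.1,
        show ((1:ℂ) - (x:ℝ)) = ((1 - x : ℝ) : ℂ) by push_cast; ring,
        ← Complex.ofReal_cpow (by linarith [hx.2] : (0:ℝ) ≤ 1 - x)]
  rw [hco, show ((p:ℂ) + q) = ((p + q : ℝ) : ℂ) by push_cast; ring,
      Complex.Gamma_ofReal, Complex.Gamma_ofReal, Complex.Gamma_ofReal,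
      ← Complex.ofReal_mul, ← Complex.ofReal_mul, Complex.ofReal_inj] at key
  field_simp
  linarith [key]

lemma beta_integrableOn {p q : ℝ} (hp : 0 < p) (hq : 0 < q) :
    IntegrableOn (fun x : ℝ => x ^ (p - 1) * (1 - x) ^ (q - 1)) (Set.Icc 0 1) := by
  have hF := Complex.betaIntegral_convergent (u := (p:ℂ)) (v := (q:ℂ))
    (by simpa using hp) (by simpa using hq)
  have h1 : IntegrableOn (fun x : ℝ =>
      ((x:ℂ) ^ ((p:ℂ) - 1) * (1 - (x:ℂ)) ^ ((q:ℂ) - 1)).re) (Set.Ioc (0:ℝ) 1) := hF.1.re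
  rw [integrableOn_Icc_iff_integrableOn_Ioc]
  refine h1.congr_fun (fun x hx => ?_) measurableSet_Ioc
  have hx0 : (0:ℝ) ≤ x := le_of_lt hx.1
  have hx1 : (0:ℝ) ≤ 1 - x := by linarith [hx.2]
  beta_reduce
  rw [show (p:ℂ) - 1 = ((p - 1 : ℝ) : ℂ) by push_cast; ring,
      show (q:ℂ) - 1 = ((q - 1 : ℝ) : ℂ) by push_cast; ring,
      show ((1:ℂ) - (x:ℝ)) = ((1 - x : ℝ) : ℂ) by push_cast; ring,
      ← Complex.ofReal_cpow hx0, ← Complex.ofReal_cpow hx1,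
      ← Complex.ofReal_mul, Complex.ofReal_re]

lemma sin_rpow_integrable {s : ℝ} (hs0 : 0 < s) (hs1 : s < 1) :
    IntervalIntegrable (fun θ : ℝ => Real.sin θ ^ (-s)) MeasureTheory.volume 0 (π / 2) := by
  have hpi : (0:ℝ) < π / 2 := by positivity
  rw [intervalIntegrable_iff_integrableOn_Ioc_of_le hpi.le]
  have hdom : IntegrableOn (fun θ : ℝ => (π / 2) ^ s * θ ^ (-s)) (Set.Ioc 0 (π / 2)) := by
    have h := (intervalIntegral.intervalIntegrable_rpow' (a := 0) (b := π / 2)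
      (show (-1:ℝ) < -s by linarith)).const_mul ((π / 2) ^ s)
    rwa [intervalIntegrable_iff_integrableOn_Ioc_of_le hpi.le] at h
  refine hdom.mono' ((Real.measurable_sin.pow_const _).aestronglyMeasurable) ?_
  refine (MeasureTheory.ae_restrict_iff' measurableSet_Ioc).mpr (Filter.Eventually.of_forall ?_)
  intro θ hθ
  have hθ0 : 0 < θ := hθ.1
  have hsin : 2 / π * θ ≤ Real.sin θ := Real.mul_le_sin hθ0.le hθ.2
  have hb : 0 < 2 / π * θ := by positivity
  have key : Real.sin θ ^ (-s) ≤ (2 / π * θ) ^ (-s) :=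
    Real.rpow_le_rpow_of_nonpos hb hsin (by linarith)
  have : (2 / π * θ) ^ (-s) = (π / 2) ^ s * θ ^ (-s) := by
    rw [Real.mul_rpow (by positivity) hθ0.le]
    congr 1
    rw [show ((2:ℝ)/π) = (π/2)⁻¹ by field_simp,
      Real.inv_rpow (by positivity : (0:ℝ) ≤ π/2), ← Real.rpow_neg (by positivity), neg_neg]
  rw [Real.norm_eq_abs, abs_of_nonneg (Real.rpow_nonneg (Real.sin_nonneg_of_nonneg_of_le_pi
    hθ0.le (by linarith [Real.pi_pos, hθ.2])) _)]
  linarith [key, this.le]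

lemma hsq_aux (x e : ℝ) (hx : 0 ≤ x) : (x ^ 2) ^ e = x ^ (2 * e) := by
  rw [← Real.rpow_natCast x 2, ← Real.rpow_mul hx]
  norm_num

lemma sin_sub {s : ℝ} (hs0 : 0 < s) (hs1 : s < 1) :
    ∫ θ in (0:ℝ)..(π/2), 2 * Real.sin θ ^ (-s)
      = ∫ x in (0:ℝ)..1, x ^ ((1 - s)/2 - 1) * (1 - x) ^ ((1/2 : ℝ) - 1) := by
  have hpi2 : (0:ℝ) < π / 2 := by positivity
  set f : ℝ → ℝ := fun θ => Real.sin θ ^ 2 with hf_def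
  set f' : ℝ → ℝ := fun θ => 2 * Real.sin θ * Real.cos θ with hf'_def
  set g : ℝ → ℝ := fun x => x ^ ((1 - s)/2 - 1) * (1 - x) ^ ((1/2 : ℝ) - 1) with hg_def
  -- pointwise identity
  have hpt : ∀ θ ∈ Set.Icc (0:ℝ) (π/2), θ ≠ π/2 → 2 * Real.sin θ ^ (-s) = f' θ • g (f θ) := by
    intro θ hθ hne
    rcases eq_or_lt_of_le hθ.1 with h0 | h0
    · simp only [← h0, hf_def, hf'_def, hg_def, Real.sin_zero, Real.cos_zero, smul_eq_mul]
      rw [Real.zero_rpow (by linarith : -s ≠ 0)]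
      ring
    · have hθlt : θ < π / 2 := lt_of_le_of_ne hθ.2 hne
      have hsin : 0 < Real.sin θ := Real.sin_pos_of_pos_of_lt_pi h0 (by linarith [Real.pi_pos])
      have hcos : 0 < Real.cos θ := Real.cos_pos_of_mem_Ioo ⟨by linarith, hθlt⟩
      simp only [hf_def, hf'_def, hg_def, smul_eq_mul]
      rw [show (1 - Real.sin θ ^ 2) = Real.cos θ ^ 2 by
            have := Real.sin_sq_add_cos_sq θ; linarith,
          hsq_aux _ _ hsin.le, hsq_aux _ _ hcos.le,
          show 2 * ((1 - s)/2 - 1) = -1 + -s by ring,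
          show 2 * ((1/2 : ℝ) - 1) = -1 by norm_num,
          Real.rpow_add hsin, Real.rpow_neg_one, Real.rpow_neg_one]
      field_simp
  have hne : ∀ᵐ x : ℝ, x ≠ π / 2 := by
    refine MeasureTheory.ae_iff.mpr ?_
    simp only [ne_eq, not_not]
    exact MeasureTheory.measure_mono_null (fun x hx => hx) (Real.volume_singleton)
  -- integrability of the left-hand side
  have hbase : IntervalIntegrable (fun θ : ℝ => 2 * Real.sin θ ^ (-s))
      MeasureTheory.volume 0 (π/2) := (sin_rpow_integrable hs0 hs1).const_mul 2
  have key := intervalIntegral.integral_comp_smul_deriv''' (a := 0) (b := π/2)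
    (f := f) (f' := f') (g := g)
    (Continuous.continuousOn (by fun_prop))
    (by
      intro x hx
      have h := ((Real.hasDerivAt_sin x).pow 2).hasDerivWithinAt (s := Set.Ioi x)
      simp [hf_def, hf'_def, mul_comm, mul_left_comm, pow_one] at h ⊢; exact h)
    (by
      -- continuity of g on the image of the open interval
      have hsub : f '' Set.Ioo (min (0:ℝ) (π/2)) (max 0 (π/2)) ⊆ Set.Ioo (0:ℝ) 1 := by
        rw [min_eq_left hpi2.le, max_eq_right hpi2.le]
        rintro _ ⟨θ, hθ, rfl⟩
        have hsin : 0 < Real.sin θ := Real.sin_pos_of_pos_of_lt_pi hθ.1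
          (by linarith [Real.pi_pos, hθ.2])
        have hsin1 : Real.sin θ < 1 := by
          have := Real.cos_pos_of_mem_Ioo (show θ ∈ Set.Ioo (-(π/2)) (π/2) from
            ⟨by linarith [hθ.1], hθ.2⟩)
          nlinarith [Real.sin_sq_add_cos_sq θ]
        exact ⟨by positivity, show Real.sin θ ^ 2 < 1 by nlinarith⟩
      refine ContinuousOn.mono ?_ hsub
      apply ContinuousOn.mul
      · exact ContinuousOn.rpow_const continuousOn_id fun x hx => Or.inl (ne_of_gt hx.1)
      · exact ContinuousOn.rpow_const (continuousOn_const.sub continuousOn_id)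
          fun x hx => Or.inl (sub_ne_zero_of_ne (ne_of_lt hx.2).symm)
    )
    (by
      refine (beta_integrableOn (by linarith : (0:ℝ) < (1-s)/2) (by norm_num : (0:ℝ) < (1/2:ℝ))).mono_set ?_
      rintro _ ⟨θ, _, rfl⟩
      exact ⟨sq_nonneg _, Real.sin_sq_le_one θ⟩)
    (by
      rw [Set.uIcc_of_le hpi2.le, integrableOn_Icc_iff_integrableOn_Ioc]
      have hb := (intervalIntegrable_iff_integrableOn_Ioc_of_le hpi2.le).mp hbase
      refine hb.congr ?_
      refine (MeasureTheory.ae_restrict_iff' measurableSet_Ioc).mpr ?_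
      filter_upwards [hne] with θ hθne hθmem
      simpa [Function.comp] using hpt θ ⟨hθmem.1.le, hθmem.2⟩ hθne)
  have hLHS : ∫ θ in (0:ℝ)..(π/2), 2 * Real.sin θ ^ (-s)
      = ∫ θ in (0:ℝ)..(π/2), f' θ • g (f θ) := by
    apply intervalIntegral.integral_congr_ae
    filter_upwards [hne] with θ hθne hθmem
    rw [Set.uIoc_of_le hpi2.le] at hθmem
    exact hpt θ ⟨hθmem.1.le, hθmem.2⟩ hθne
  simp only [Function.comp] at key
  rw [hLHS, key]
  simp [hf_def, hg_def, Real.sin_pi_div_two]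


/-- The `s`-energy of the uniform measure on the unit circle:
`(1/2π)∫₀^{2π}(2-2cos φ)^{-s/2} dφ = (1/2π)∫₀^{2π}(2 sin(φ/2))^{-s} dφ
 = Γ(1-s)/Γ(1-s/2)² = 2^{-s}Γ((1-s)/2)/(√π Γ(1-s/2))` for `0 < s < 1`. -/
theorem circle_energy (s : ℝ) (hs0 : 0 < s) (hs1 : s < 1) :
    ((1 / (2 * Real.pi)) * ∫ φ in (0:ℝ)..(2 * Real.pi), (2 - 2 * Real.cos φ) ^ (-(s / 2)))
      = (1 / (2 * Real.pi)) * ∫ φ in (0:ℝ)..(2 * Real.pi), (2 * Real.sin (φ / 2)) ^ (-s) ∧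
    ((1 / (2 * Real.pi)) * ∫ φ in (0:ℝ)..(2 * Real.pi), (2 - 2 * Real.cos φ) ^ (-(s / 2)))
      = Real.Gamma (1 - s) / (Real.Gamma (1 - s / 2)) ^ 2 ∧
    ((1 / (2 * Real.pi)) * ∫ φ in (0:ℝ)..(2 * Real.pi), (2 - 2 * Real.cos φ) ^ (-(s / 2)))
      = (2 : ℝ) ^ (-s) * Real.Gamma ((1 - s) / 2)
          / (Real.sqrt Real.pi * Real.Gamma (1 - s / 2)) := by
  have hπ := Real.pi_pos
  have hq0 : Real.Gamma (1 - s / 2) ≠ 0 := (Real.Gamma_pos_of_pos (by linarith)).ne'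
  have hsπ : Real.sqrt π ≠ 0 := by positivity
  -- Step 1: integrand identity
  have h1 : (∫ φ in (0:ℝ)..(2 * π), (2 - 2 * Real.cos φ) ^ (-(s / 2)))
      = ∫ φ in (0:ℝ)..(2 * π), (2 * Real.sin (φ / 2)) ^ (-s) := by
    apply intervalIntegral.integral_congr
    intro φ hφ
    rw [Set.uIcc_of_le (by positivity : (0:ℝ) ≤ 2 * π)] at hφ
    show (2 - 2 * Real.cos φ) ^ (-(s / 2)) = (2 * Real.sin (φ / 2)) ^ (-s)
    have hsn : 0 ≤ Real.sin (φ / 2) :=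
      Real.sin_nonneg_of_nonneg_of_le_pi (by linarith [hφ.1]) (by linarith [hφ.2])
    have hkey : 2 - 2 * Real.cos φ = (2 * Real.sin (φ / 2)) ^ 2 := by
      have h2 := Real.cos_two_mul (φ / 2)
      have h3 := Real.sin_sq_add_cos_sq (φ / 2)
      rw [show 2 * (φ / 2) = φ by ring] at h2
      nlinarith
    rw [hkey, hsq_aux _ _ (by linarith : (0:ℝ) ≤ 2 * Real.sin (φ / 2)),
      show 2 * (-(s / 2)) = -s by ring]
  -- Step 2: substitution φ = 2u
  have e1 : (∫ φ in (0:ℝ)..(2 * π), (2 * Real.sin (φ / 2)) ^ (-s))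
      = 2 * ∫ u in (0:ℝ)..π, (2 * Real.sin u) ^ (-s) := by
    have := intervalIntegral.integral_comp_div (a := (0:ℝ)) (b := 2 * π) (c := (2:ℝ))
      (f := fun u => (2 * Real.sin u) ^ (-s)) two_ne_zero
    rw [show (0:ℝ) / 2 = 0 by norm_num, show (2 * π) / 2 = π by ring, smul_eq_mul] at this
    exact this
  -- Step 3: pull out 2^{-s}
  have e2 : (∫ u in (0:ℝ)..π, (2 * Real.sin u) ^ (-s))
      = (2:ℝ) ^ (-s) * ∫ u in (0:ℝ)..π, Real.sin u ^ (-s) := by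
    rw [← intervalIntegral.integral_const_mul]
    apply intervalIntegral.integral_congr
    intro u hu
    rw [Set.uIcc_of_le hπ.le] at hu
    show (2 * Real.sin u) ^ (-s) = (2:ℝ) ^ (-s) * Real.sin u ^ (-s)
    rw [Real.mul_rpow (by norm_num) (Real.sin_nonneg_of_nonneg_of_le_pi hu.1 hu.2)]
  -- Step 4: symmetry about π/2
  have I1 := sin_rpow_integrable hs0 hs1
  have I2 : IntervalIntegrable (fun u : ℝ => Real.sin u ^ (-s)) MeasureTheory.volume (π/2) π := by
    have h := I1.comp_sub_left π
    simp only [Real.sin_pi_sub] at h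
    rw [show π - π / 2 = π / 2 by ring, sub_zero] at h
    exact h.symm
  have e3 : (∫ u in (0:ℝ)..π, Real.sin u ^ (-s))
      = 2 * ∫ u in (0:ℝ)..(π/2), Real.sin u ^ (-s) := by
    have hadd := intervalIntegral.integral_add_adjacent_intervals I1 I2
    have hrefl := intervalIntegral.integral_comp_sub_left (a := (0:ℝ)) (b := π/2)
      (fun u => Real.sin u ^ (-s)) π
    simp only [Real.sin_pi_sub] at hrefl
    rw [show π - π / 2 = π / 2 by ring, sub_zero] at hrefl
    linarith [hadd, hrefl]
  -- Step 5: Beta value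
  have e4 : (∫ u in (0:ℝ)..(π/2), Real.sin u ^ (-s))
      = (1/2) * (Real.Gamma ((1 - s)/2) * Real.sqrt π / Real.Gamma (1 - s/2)) := by
    have h := sin_sub hs0 hs1
    rw [real_beta (by linarith : (0:ℝ) < (1 - s)/2) (by norm_num : (0:ℝ) < (1/2:ℝ)),
      show (1 - s)/2 + 1/2 = 1 - s/2 by ring, Real.Gamma_one_half_eq] at h
    rw [intervalIntegral.integral_const_mul] at h
    linarith
  -- value of the whole integral
  have hA : (∫ φ in (0:ℝ)..(2 * π), (2 - 2 * Real.cos φ) ^ (-(s / 2)))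
      = 2 * ((2:ℝ) ^ (-s) * (Real.Gamma ((1 - s)/2) * Real.sqrt π / Real.Gamma (1 - s/2))) := by
    rw [h1, e1, e2, e3, e4]; ring
  have h2s : (2:ℝ) ^ (-s) * (2:ℝ) ^ s = 1 := by
    rw [← Real.rpow_add two_pos, neg_add_cancel, Real.rpow_zero]
  have hπsq : Real.sqrt π * Real.sqrt π = π := Real.mul_self_sqrt hπ.le
  set G1 := Real.Gamma ((1 - s)/2) with hG1d
  set G2 := Real.Gamma (1 - s/2) with hG2d
  set t2 := (2:ℝ) ^ (-s) with ht2d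
  set t2' := (2:ℝ) ^ s with ht2d'
  set q := Real.sqrt π with hqd
  have hthird : ((1 / (2 * Real.pi)) * ∫ φ in (0:ℝ)..(2 * Real.pi),
        (2 - 2 * Real.cos φ) ^ (-(s / 2)))
      = t2 * G1 / (q * G2) := by
    rw [hA, ← hπsq]
    field_simp
  refine ⟨by rw [h1], ?_, hthird⟩
  rw [hthird]
  have hdup := Real.Gamma_mul_Gamma_add_half ((1 - s)/2)
  rw [show (1 - s)/2 + 1/2 = 1 - s/2 by ring, show 2 * ((1 - s)/2) = 1 - s by ring] at hdup
  rw [show (1:ℝ) - (1 - s) = s by ring] at hdup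
  rw [← hG1d, ← hG2d, ← ht2d'] at hdup
  rw [div_eq_div_iff (mul_ne_zero hsπ hq0) (pow_ne_zero 2 hq0)]
  linear_combination (t2 * G2) * hdup + (Real.Gamma (1 - s) * q * G2) * h2s
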